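/- Let α ∈ (0,1). For each n ∈ ℕ let (Ω_n, F_n, P_n) be a probability space carrying a random element X_n of a measurable space E_n and random elements W_{n,0}, W_{n,1}, …, W_{n,B_n} of a measurable space F_n that are i.i.d. and independent of X_n, where B_n ∈ ℕ satisfies B_n > α^{-1} − 1. Let f_n, g_n : E_n × F_n → ℝ be measurable, set M_{n,0} = f_n(X_n, W_{n,0}) and M_{n,i} = g_n(X_n, W_{n,i}) for 1 ≤ i ≤ B_n, and define p̂_n = (B_n + 1)^{-1}·(Σ_{i=1}^{B_n} 1{M_{n,0} ≤ M_{n,i}} + 1). If lim_{n→∞} P_n(M_{n,0} ≤ M_{n,1}) exists and is strictly greater than α, then limsup_{n→∞} P_n(p̂_n ≤ α) < 1. -/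

import Mathlib

open MeasureTheory ProbabilityTheory Filter

noncomputable section

/-- inconsistency of the resampling test when the limiting
probability of `M_{n,0} ≤ M_{n,1}` exceeds the level `α`. -/
theorem resampling_test_inconsistent
    (α : ℝ) (hα0 : 0 < α) (hα1 : α < 1)
    (Ω : ℕ → Type*) [mΩ : ∀ n, MeasurableSpace (Ω n)]
    (P : ∀ n, Measure (Ω n)) [hP : ∀ n, IsProbabilityMeasure (P n)]
    (E F : ℕ → Type*) [mE : ∀ n, MeasurableSpace (E n)] [mF : ∀ n, MeasurableSpace (F n)]
    (B : ℕ → ℕ) (hB : ∀ n, α⁻¹ - 1 < (B n : ℝ))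
    (X : ∀ n, Ω n → E n) (hX : ∀ n, Measurable (X n))
    (W : ∀ n, Fin (B n + 1) → Ω n → F n) (hW : ∀ n i, Measurable (W n i))
    (hiid : ∀ n, iIndepFun (W n) (P n))
    (hident : ∀ n, ∀ i : Fin (B n + 1), (P n).map (W n i) = (P n).map (W n 0))
    (hindepX : ∀ n, IndepFun (fun ω => fun i => W n i ω) (X n) (P n))
    (f g : ∀ n, E n × F n → ℝ) (hf : ∀ n, Measurable (f n)) (hg : ∀ n, Measurable (g n))
    (L : ℝ) (hL : α < L)
    (hlim : Tendsto
      (fun n => ((P n) {ω | f n (X n ω, W n 0 ω) ≤ g n (X n ω, W n 1 ω)}).toReal)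
      atTop (nhds L)) :
    limsup (fun n => ((P n) {ω |
        ((∑ i : Fin (B n),
            if f n (X n ω, W n 0 ω) ≤ g n (X n ω, W n i.succ ω) then (1 : ℝ) else 0) + 1)
          / ((B n : ℝ) + 1) ≤ α}).toReal) atTop < 1 := by
  -- notation
  set p : ℕ → ℝ := fun n => ((P n) {ω | f n (X n ω, W n 0 ω) ≤ g n (X n ω, W n 1 ω)}).toReal
    with hpdef
  set a : ℕ → ℝ := fun n => ((P n) {ω |
        ((∑ i : Fin (B n),
            if f n (X n ω, W n 0 ω) ≤ g n (X n ω, W n i.succ ω) then (1 : ℝ) else 0) + 1)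
          / ((B n : ℝ) + 1) ≤ α}).toReal with hadef
  have key : ∀ n, a n ≤ (1 - p n) / (1 - α) := by
    intro n
    have hBpos : 1 ≤ B n := by
      rcases Nat.eq_zero_or_pos (B n) with h | h
      · exfalso
        have h1 : (1:ℝ) < α⁻¹ := (one_lt_inv₀ hα0).mpr hα1
        have h2 := hB n
        rw [h] at h2
        simp at h2
        linarith
      · exact h
    have h1ne : (1 : Fin (B n + 1)) ≠ 0 := by
      have : (1 : ℕ) % (B n + 1) = 1 := Nat.mod_eq_of_lt (by omega)
      simp [Fin.ext_iff, Fin.val_one', this]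
    -- identical laws
    have hC : MeasurableSet {q : E n × F n × F n | f n (q.1, q.2.1) ≤ g n (q.1, q.2.2)} :=
      measurableSet_le ((hf n).comp (measurable_fst.prodMk (measurable_fst.comp measurable_snd)))
        ((hg n).comp (measurable_fst.prodMk (measurable_snd.comp measurable_snd)))
    have hmapT : ∀ j : Fin (B n + 1), j ≠ 0 →
        (P n).map (fun ω => (X n ω, (W n 0 ω, W n j ω)))
          = ((P n).map (X n)).prod (((P n).map (W n 0)).prod ((P n).map (W n 0))) := by
      intro j hj
      have hpair : IndepFun (W n 0) (W n j) (P n) := (hiid n).indepFun (Ne.symm hj)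
      have h1 : (P n).map (fun ω => (W n 0 ω, W n j ω))
          = ((P n).map (W n 0)).prod ((P n).map (W n 0)) := by
        rw [(indepFun_iff_map_prod_eq_prod_map_map (hW n 0).aemeasurable
          (hW n j).aemeasurable).mp hpair, hident n j]
      have hXp : IndepFun (X n) (fun ω => (W n 0 ω, W n j ω)) (P n) :=
        ((hindepX n).comp ((measurable_pi_apply 0).prodMk (measurable_pi_apply j))
          measurable_id).symm
      rw [(indepFun_iff_map_prod_eq_prod_map_map (hX n).aemeasurable
        ((hW n 0).prodMk (hW n j)).aemeasurable).mp hXp, h1]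
    have hprob : ∀ j : Fin (B n + 1), j ≠ 0 →
        (P n) {ω | f n (X n ω, W n 0 ω) ≤ g n (X n ω, W n j ω)}
          = (P n) {ω | f n (X n ω, W n 0 ω) ≤ g n (X n ω, W n 1 ω)} := by
      intro j hj
      have hTm : ∀ j : Fin (B n + 1), Measurable (fun ω => (X n ω, (W n 0 ω, W n j ω))) :=
        fun j => (hX n).prodMk ((hW n 0).prodMk (hW n j))
      have e1 : (P n) {ω | f n (X n ω, W n 0 ω) ≤ g n (X n ω, W n j ω)}
          = ((P n).map (fun ω => (X n ω, (W n 0 ω, W n j ω))))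
              {q : E n × F n × F n | f n (q.1, q.2.1) ≤ g n (q.1, q.2.2)} := by
        rw [Measure.map_apply (hTm j) hC]; rfl
      have e2 : (P n) {ω | f n (X n ω, W n 0 ω) ≤ g n (X n ω, W n 1 ω)}
          = ((P n).map (fun ω => (X n ω, (W n 0 ω, W n 1 ω))))
              {q : E n × F n × F n | f n (q.1, q.2.1) ≤ g n (q.1, q.2.2)} := by
        rw [Measure.map_apply (hTm 1) hC]; rfl
      rw [e1, e2, hmapT j hj, hmapT 1 h1ne]
    -- sets and indicator sum
    set s : Fin (B n) → Set (Ω n) :=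
      fun i => {ω | f n (X n ω, W n 0 ω) ≤ g n (X n ω, W n i.succ ω)} with hsdef
    have hs : ∀ i, MeasurableSet (s i) := fun i =>
      measurableSet_le ((hf n).comp ((hX n).prodMk (hW n 0)))
        ((hg n).comp ((hX n).prodMk (hW n i.succ)))
    set S : Ω n → ℝ := fun ω => ∑ i : Fin (B n),
        if f n (X n ω, W n 0 ω) ≤ g n (X n ω, W n i.succ ω) then (1 : ℝ) else 0 with hSdef
    have hSeq : ∀ ω, S ω = ∑ i : Fin (B n), (s i).indicator (fun _ => (1:ℝ)) ω := by
      intro ω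
      refine Finset.sum_congr rfl fun i _ => ?_
      rw [Set.indicator_apply]; rfl
    have hSmeas : Measurable S := by
      apply Finset.measurable_sum
      intro i _
      exact Measurable.ite (hs i) measurable_const measurable_const
    have hSint : Integrable S (P n) := by
      have : Integrable (fun ω => ∑ i : Fin (B n), (s i).indicator (fun _ => (1:ℝ)) ω) (P n) :=
        integrable_finset_sum _ (fun i _ => (integrable_const (1:ℝ)).indicator (hs i))
      exact this.congr (Filter.Eventually.of_forall fun ω => (hSeq ω).symm)
    have hSintegral : ∫ ω, S ω ∂(P n) = (B n : ℝ) * p n := by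
      rw [integral_congr_ae (Filter.Eventually.of_forall hSeq),
        integral_finset_sum _ (fun i _ => (integrable_const (1:ℝ)).indicator (hs i))]
      have : ∀ i : Fin (B n), ∫ ω, (s i).indicator (fun _ => (1:ℝ)) ω ∂(P n) = p n := by
        intro i
        rw [show (fun _ : Ω n => (1:ℝ)) = (1 : Ω n → ℝ) from rfl, integral_indicator_one (hs i)]
        simp only [hpdef]
        rw [measureReal_def, hprob i.succ (Fin.succ_ne_zero i)]
      rw [Finset.sum_congr rfl (fun i _ => this i)]
      simp [Finset.card_univ]
    -- the rejection event
    set A : Set (Ω n) := {ω | (S ω + 1) / ((B n : ℝ) + 1) ≤ α} with hAdef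
    have hA : MeasurableSet A :=
      measurableSet_le ((hSmeas.add_const 1).div_const _) measurable_const
    have hBn1 : (0:ℝ) < (B n : ℝ) + 1 := by positivity
    -- pointwise bound
    have hpt : ∀ ω, S ω + ((B n : ℝ) + 1) * (1 - α) * A.indicator (fun _ => (1:ℝ)) ω
        ≤ (B n : ℝ) := by
      intro ω
      by_cases hω : ω ∈ A
      · rw [Set.indicator_of_mem hω]
        have h1 : (S ω + 1) / ((B n : ℝ) + 1) ≤ α := hω
        have h2 : S ω + 1 ≤ α * ((B n : ℝ) + 1) := by
          rwa [div_le_iff₀ hBn1] at h1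
        nlinarith
      · rw [Set.indicator_of_notMem hω, mul_zero, add_zero]
        calc S ω ≤ ∑ _i : Fin (B n), (1:ℝ) := by
              refine Finset.sum_le_sum fun i _ => ?_
              split <;> norm_num
          _ = (B n : ℝ) := by simp
    -- integrate
    have hmain : (B n : ℝ) * p n + ((B n : ℝ) + 1) * (1 - α) * ((P n) A).toReal
        ≤ (B n : ℝ) := by
      have hintA : Integrable (fun ω => ((B n : ℝ) + 1) * (1 - α)
          * A.indicator (fun _ => (1:ℝ)) ω) (P n) :=
        ((integrable_const (1:ℝ)).indicator hA).const_mul _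
      have hle : ∫ ω, (S ω + ((B n : ℝ) + 1) * (1 - α) * A.indicator (fun _ => (1:ℝ)) ω) ∂(P n)
          ≤ ∫ _ω, (B n : ℝ) ∂(P n) :=
        integral_mono (hSint.add hintA) (integrable_const _) hpt
      rw [integral_add hSint hintA, integral_const, integral_const_mul, hSintegral] at hle
      simp only [measure_univ, ENNReal.toReal_one, probReal_univ, smul_eq_mul, one_mul] at hle
      calc (B n : ℝ) * p n + ((B n : ℝ) + 1) * (1 - α) * ((P n) A).toReal
          = (B n : ℝ) * p n + ((B n : ℝ) + 1) * (1 - α)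
            * ∫ ω, A.indicator (fun _ => (1:ℝ)) ω ∂(P n) := by
            rw [show (fun _ : Ω n => (1:ℝ)) = (1 : Ω n → ℝ) from rfl,
              integral_indicator_one hA, measureReal_def]
        _ ≤ (B n : ℝ) := hle
    have hp1 : p n ≤ 1 := by
      simp only [hpdef]
      exact ENNReal.toReal_le_of_le_ofReal one_pos.le (by simpa using prob_le_one)
    have hPA0 : (0:ℝ) ≤ ((P n) A).toReal := ENNReal.toReal_nonneg
    have han : a n = ((P n) A).toReal := rfl
    rw [han, le_div_iff₀ (by linarith : (0:ℝ) < 1 - α)]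
    nlinarith [hmain, hp1, hPA0, hBn1]
  -- limit step
  have hb : Tendsto (fun n => (1 - p n) / (1 - α)) atTop (nhds ((1 - L) / (1 - α))) :=
    (tendsto_const_nhds.sub hlim).div_const _
  have hlimsup : limsup a atTop ≤ (1 - L) / (1 - α) := by
    rw [← hb.limsup_eq]
    refine limsup_le_limsup (Filter.Eventually.of_forall key) ?_ ?_
    · exact isCoboundedUnder_le_of_le atTop (fun n => ENNReal.toReal_nonneg)
    · exact hb.isBoundedUnder_le
  refine lt_of_le_of_lt hlimsup ?_
  rw [div_lt_one (by linarith)]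
  linarith

end
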